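/- Let ε > 0, let K = diag(k₁, k₂), L = diag(l₁, l₂), D = diag(d₁, d₂) be 2×2 real diagonal matrices with all of k₁, k₂, l₁, l₂, d₁, d₂ > 0, and let H be a 2×2 real symmetric positive definite matrix. Then the 4×4 real block matrix A = [[0, −(1/√ε)·K],[D·H, −L]] is Hurwitz. -/

import Mathlib

/-- A square real matrix is Hurwitz if every root of its characteristic polynomial over `ℂ`
(i.e., every eigenvalue) has strictly negative real part. -/
def IsHurwitz {ι : Type} [Fintype ι] [DecidableEq ι] (M : Matrix ι ι ℝ) : Prop :=
  ∀ z ∈ (M.map (algebraMap ℝ ℂ)).charpoly.roots, z.re < 0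

open Polynomial in
lemma root_charpoly_eigvec {n : Type} [Fintype n] [DecidableEq n] (N : Matrix n n ℂ) (z : ℂ)
    (hz : N.charpoly.IsRoot z) : ∃ v ≠ 0, N.mulVec v = z • v := by
  have hmap : (Matrix.charmatrix N).map (Polynomial.evalRingHom z) = z • (1 : Matrix n n ℂ) - N := by
    ext i j
    by_cases h : i = j <;>
      simp [h, Matrix.charmatrix_apply, Matrix.diagonal, Matrix.one_apply]
  have hdet : (z • (1 : Matrix n n ℂ) - N).det = 0 := by
    have : (Polynomial.evalRingHom z) (Matrix.charmatrix N).det = 0 := hz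
    rw [RingHom.map_det] at this
    rwa [RingHom.mapMatrix_apply, hmap] at this
  obtain ⟨v, hv, hveq⟩ := (Matrix.exists_mulVec_eq_zero_iff).2 hdet
  refine ⟨v, hv, ?_⟩
  rw [Matrix.sub_mulVec, Matrix.smul_mulVec, Matrix.one_mulVec, sub_eq_zero] at hveq
  exact hveq.symm

set_option maxHeartbeats 1000000 in
theorem block_matrix_hurwitz
    (ε k₁ k₂ l₁ l₂ d₁ d₂ : ℝ)
    (hε : 0 < ε) (hk₁ : 0 < k₁) (hk₂ : 0 < k₂) (hl₁ : 0 < l₁) (hl₂ : 0 < l₂)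
    (hd₁ : 0 < d₁) (hd₂ : 0 < d₂)
    (H : Matrix (Fin 2) (Fin 2) ℝ) (hH : H.PosDef)
    (K : Matrix (Fin 2) (Fin 2) ℝ) (hK : K = Matrix.diagonal ![k₁, k₂])
    (L : Matrix (Fin 2) (Fin 2) ℝ) (hL : L = Matrix.diagonal ![l₁, l₂])
    (D : Matrix (Fin 2) (Fin 2) ℝ) (hD : D = Matrix.diagonal ![d₁, d₂]) :
    IsHurwitz (Matrix.fromBlocks 0 (-((1 / Real.sqrt ε) • K)) (D * H) (-L)) := by
  subst hK hL hD
  intro z hz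
  set c : ℝ := 1 / Real.sqrt ε with hc
  have hcpos : 0 < c := by positivity
  have hzr := ((Polynomial.mem_roots (Matrix.charpoly_monic _).ne_zero).1 hz)
  obtain ⟨v, hv, hmv⟩ := root_charpoly_eigvec _ z hzr
  set x₀ := v (Sum.inl 0) with hx₀
  set x₁ := v (Sum.inl 1) with hx₁
  set y₀ := v (Sum.inr 0) with hy₀
  set y₁ := v (Sum.inr 1) with hy₁
  have E1 := congrFun hmv (Sum.inl 0)
  have E2 := congrFun hmv (Sum.inl 1)
  have E3 := congrFun hmv (Sum.inr 0)
  have E4 := congrFun hmv (Sum.inr 1)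
  simp [Matrix.mulVec, dotProduct, Fintype.sum_sum_type, Fin.sum_univ_two,
    Matrix.fromBlocks, Matrix.map_apply, Matrix.diagonal, Matrix.mul_apply,
    Matrix.smul_apply, Matrix.neg_apply, ← hx₀, ← hx₁, ← hy₀, ← hy₁] at E1 E2 E3 E4
  clear hz hzr hmv

  -- facts about H
  have hsym : H 1 0 = H 0 1 := by
    have := hH.1.apply 0 1
    simpa using this
  have hq : ∀ p q : ℝ, 0 ≤ H 0 0 * p^2 + 2 * H 0 1 * p * q + H 1 1 * q^2 := by
    intro p q
    have := hH.posSemidef.dotProduct_mulVec_nonneg ![p, q]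
    simp [Matrix.mulVec, dotProduct, Fin.sum_univ_two] at this
    rw [hsym] at this
    nlinarith [this]
  have hdet : 0 < H 0 0 * H 1 1 - H 0 1 * H 0 1 := by
    have := hH.det_pos
    rw [Matrix.det_fin_two, hsym] at this
    nlinarith [this]
  -- case y = 0
  by_cases hy : y₀ = 0 ∧ y₁ = 0
  · exfalso
    obtain ⟨hy0, hy1⟩ := hy
    rw [hy0] at E3
    rw [hy1] at E4
    have hd1c : (d₁ : ℂ) ≠ 0 := by exact_mod_cast hd₁.ne'
    have hd2c : (d₂ : ℂ) ≠ 0 := by exact_mod_cast hd₂.ne'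
    have hu : (H 0 0 : ℂ) * x₀ + (H 0 1 : ℂ) * x₁ = 0 := by
      have h3 : (d₁ : ℂ) * ((H 0 0 : ℂ) * x₀ + (H 0 1 : ℂ) * x₁) = 0 := by
        linear_combination E3
      exact (mul_eq_zero.1 h3).resolve_left hd1c
    have hw : (H 0 1 : ℂ) * x₀ + (H 1 1 : ℂ) * x₁ = 0 := by
      have h4 : (d₂ : ℂ) * ((H 0 1 : ℂ) * x₀ + (H 1 1 : ℂ) * x₁) = 0 := by
        rw [hsym] at E4
        linear_combination E4
      exact (mul_eq_zero.1 h4).resolve_left hd2c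
    have hdetc : ((H 0 0 * H 1 1 - H 0 1 * H 0 1 : ℝ) : ℂ) ≠ 0 := by
      exact_mod_cast hdet.ne'
    have hx0 : x₀ = 0 := by
      have : ((H 0 0 * H 1 1 - H 0 1 * H 0 1 : ℝ) : ℂ) * x₀ = 0 := by
        push_cast
        linear_combination (H 1 1 : ℂ) * hu - (H 0 1 : ℂ) * hw
      exact (mul_eq_zero.1 this).resolve_left hdetc
    have hx1 : x₁ = 0 := by
      have : ((H 0 0 * H 1 1 - H 0 1 * H 0 1 : ℝ) : ℂ) * x₁ = 0 := by
        push_cast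
        linear_combination (H 0 0 : ℂ) * hw - (H 0 1 : ℂ) * hu
      exact (mul_eq_zero.1 this).resolve_left hdetc
    apply hv
    funext i
    rcases i with i | i <;> fin_cases i
    · exact hx0
    · exact hx1
    · exact hy0
    · exact hy1
  · -- main case : y ≠ 0
    set a : ℝ := k₁ * d₂ * Complex.normSq y₀ + k₂ * d₁ * Complex.normSq y₁ with ha
    set m : ℝ := k₁ * l₁ * d₂ * Complex.normSq y₀ + k₂ * l₂ * d₁ * Complex.normSq y₁ with hm
    have hapos : 0 < a := by
      rw [ha]
      rcases not_and_or.1 hy with h | h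
      · have h' := Complex.normSq_pos.2 h
        nlinarith [mul_pos (mul_pos hk₁ hd₂) h',
          mul_nonneg (mul_nonneg hk₂.le hd₁.le) (Complex.normSq_nonneg y₁)]
      · have h' := Complex.normSq_pos.2 h
        nlinarith [mul_pos (mul_pos hk₂ hd₁) h',
          mul_nonneg (mul_nonneg hk₁.le hd₂.le) (Complex.normSq_nonneg y₀)]
    have hmpos : 0 < m := by
      rw [hm]
      rcases not_and_or.1 hy with h | h
      · have h' := Complex.normSq_pos.2 h
        nlinarith [mul_pos (mul_pos (mul_pos hk₁ hl₁) hd₂) h',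
          mul_nonneg (mul_nonneg (mul_nonneg hk₂.le hl₂.le) hd₁.le) (Complex.normSq_nonneg y₁)]
      · have h' := Complex.normSq_pos.2 h
        nlinarith [mul_pos (mul_pos (mul_pos hk₂ hl₂) hd₁) h',
          mul_nonneg (mul_nonneg (mul_nonneg hk₁.le hl₁.le) hd₂.le) (Complex.normSq_nonneg y₀)]
    set r : ℝ := H 0 0 * Complex.normSq x₀ + H 1 1 * Complex.normSq x₁
      + 2 * H 0 1 * (x₀.re * x₁.re + x₀.im * x₁.im) with hr
    have hrpos : 0 ≤ r := by
      have h1 := hq x₀.re x₁.re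
      have h2 := hq x₀.im x₁.im
      have hre : r = (H 0 0 * x₀.re^2 + 2 * H 0 1 * x₀.re * x₁.re + H 1 1 * x₁.re^2)
          + (H 0 0 * x₀.im^2 + 2 * H 0 1 * x₀.im * x₁.im + H 1 1 * x₁.im^2) := by
        rw [hr]
        simp only [Complex.normSq_apply]
        ring
      rw [hre]
      linarith [h1, h2]
    -- conjugated equations
    have E1' : -((c : ℂ) * (k₁ : ℂ) * (starRingEnd ℂ) y₀) = (starRingEnd ℂ) z * (starRingEnd ℂ) x₀ := by
      have := congrArg (starRingEnd ℂ) E1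
      simpa using this
    have E2' : -((c : ℂ) * (k₂ : ℂ) * (starRingEnd ℂ) y₁) = (starRingEnd ℂ) z * (starRingEnd ℂ) x₁ := by
      have := congrArg (starRingEnd ℂ) E2
      simpa using this
    -- key identity
    have hny0 : ((starRingEnd ℂ) y₀) * y₀ = (Complex.normSq y₀ : ℂ) := by
      rw [mul_comm, Complex.mul_conj]
    have hny1 : ((starRingEnd ℂ) y₁) * y₁ = (Complex.normSq y₁ : ℂ) := by
      rw [mul_comm, Complex.mul_conj]
    have hQ : (starRingEnd ℂ) x₀ * ((H 0 0 : ℂ) * x₀ + (H 0 1 : ℂ) * x₁)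
        + (starRingEnd ℂ) x₁ * ((H 0 1 : ℂ) * x₀ + (H 1 1 : ℂ) * x₁) = (r : ℂ) := by
      rw [hr]
      apply Complex.ext <;>
        simp [Complex.add_re, Complex.add_im, Complex.mul_re, Complex.mul_im,
          Complex.normSq_apply] <;> ring
    have key : (c : ℂ) * z * (a : ℂ) + (starRingEnd ℂ) z * ((d₁ : ℂ) * (d₂ : ℂ)) * (r : ℂ)
        + (c : ℂ) * (m : ℂ) = 0 := by
      rw [← hQ, ha, hm]
      push_cast
      rw [← hny0, ← hny1]
      rw [hsym] at E4
      linear_combination (-((c : ℂ) * (k₁ : ℂ) * (d₂ : ℂ) * ((starRingEnd ℂ) y₀))) * E3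
        - (c : ℂ) * (k₂ : ℂ) * (d₁ : ℂ) * ((starRingEnd ℂ) y₁) * E4
        - (d₁ : ℂ) * (d₂ : ℂ) * ((H 0 0 : ℂ) * x₀ + (H 0 1 : ℂ) * x₁) * E1'
        - (d₁ : ℂ) * (d₂ : ℂ) * ((H 0 1 : ℂ) * x₀ + (H 1 1 : ℂ) * x₁) * E2'
    have hre := congrArg Complex.re key
    simp [Complex.add_re, Complex.mul_re, Complex.ofReal_re, Complex.ofReal_im,
      Complex.conj_re, Complex.conj_im] at hre
    nlinarith [hre, mul_pos hcpos hapos, mul_pos hcpos hmpos,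
      mul_nonneg (mul_pos hd₁ hd₂).le hrpos]
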